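/- Let (Ω, F, P) be a probability space, G a sub-σ-algebra of F, and n ≥ 2. Define S = {(W_1,...,W_n) : each W_i is G-measurable, in L^p, and sum_i W_i = 0}. Then for Y = (Y_1,...,Y_n) with each Y_i in L^q (1/p + 1/q = 1), we have E[sum_i W_i Y_i] = 0 for all (W_1,...,W_n) in S if and only if E[Y_i | G] = E[Y_j | G] almost surely for all i, j. -/

import Mathlib

open MeasureTheory
open scoped BigOperators ENNReal

/-- for `Y = (Y_1,…,Y_n)` with `Y_i ∈ L^q`, the functional
`W ↦ E[∑ i, W_i Y_i]` vanishes on the subspace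
`S = {(W_1,…,W_n) : W_i G-measurable, W_i ∈ L^p, ∑ i W_i = 0}`
if and only if `E[Y_i | G] = E[Y_j | G]` a.s. for all `i, j`. -/
theorem annihilator_iff_condexp_equal
    {Ω : Type*} {mΩ : MeasurableSpace Ω} (μ : Measure Ω) [IsProbabilityMeasure μ]
    (G : MeasurableSpace Ω) (hG : G ≤ mΩ)
    (n : ℕ) (hn : 2 ≤ n)
    (p q : ℝ≥0∞) (hp : 1 ≤ p) (hp' : p ≠ ∞) (hpq : 1 / p + 1 / q = 1)
    (Y : Fin n → Ω → ℝ) (hY : ∀ i, MemLp (Y i) q μ) :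
    (∀ W : Fin n → Ω → ℝ,
        (∀ i, MemLp (W i) p μ) →
        (∀ i, StronglyMeasurable[G] (W i)) →
        (∑ i, W i) = 0 →
        ∫ ω, (∑ i, W i ω * Y i ω) ∂μ = 0) ↔
      ∀ i j, μ[Y i|G] =ᵐ[μ] μ[Y j|G] := by
  letI : MeasurableSpace Ω := mΩ
  haveI : SigmaFinite (μ.trim hG) := by
    haveI : IsFiniteMeasure (μ.trim hG) := isFiniteMeasure_trim hG
    infer_instance
  have hq : 1 ≤ q := by
    have h1 : 1 / q ≤ 1 / p + 1 / q := self_le_add_left _ _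
    rw [hpq] at h1
    rwa [one_div, ENNReal.inv_le_one] at h1
  have hYint : ∀ i, Integrable (Y i) μ := fun i => (hY i).integrable hq
  have hmul : ∀ (W : Ω → ℝ) (i : Fin n), MemLp W p μ →
      Integrable (fun ω => W ω * Y i ω) μ := by
    intro W i hW
    have h1 : MemLp (W • Y i) 1 μ := (hY i).smul hW (hpqr := ⟨by rw [inv_one, ← one_div, ← one_div, hpq]⟩)
    have h2 := memLp_one_iff_integrable.mp h1
    exact h2
  constructor
  · -- annihilator condition → equal conditional expectations
    intro h i j
    rcases eq_or_ne i j with rfl | hij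
    · rfl
    have key : ∀ s : Set Ω, MeasurableSet[G] s →
        ∫ ω in s, Y i ω ∂μ = ∫ ω in s, Y j ω ∂μ := by
      intro s hs
      have hsΩ : MeasurableSet[mΩ] s := hG s hs
      set W : Fin n → Ω → ℝ := fun k ω =>
        if k = i then s.indicator 1 ω else if k = j then -(s.indicator 1 ω) else 0 with hWdef
      have hind : MemLp (s.indicator (1 : Ω → ℝ)) p μ := by
        have := memLp_indicator_const (μ := μ) p hsΩ (1 : ℝ) (Or.inr (measure_ne_top μ s))
        exact this
      have hindG : StronglyMeasurable[G] (s.indicator (1 : Ω → ℝ)) :=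
        stronglyMeasurable_const.indicator hs
      have hWp : ∀ k, MemLp (W k) p μ := by
        intro k
        rcases eq_or_ne k i with rfl | h1
        · simpa [hWdef] using hind
        rcases eq_or_ne k j with rfl | h2
        · convert hind.neg using 1; funext ω; simp [hWdef, h1]
        · simpa [hWdef, h1, h2] using zero_memLp (p := p) (μ := μ) (E := ℝ)
      have hWm : ∀ k, StronglyMeasurable[G] (W k) := by
        intro k
        rcases eq_or_ne k i with rfl | h1
        · simpa [hWdef] using hindG
        rcases eq_or_ne k j with rfl | h2
        · convert hindG.neg using 1; funext ω; simp [hWdef, h1]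
        · simpa [hWdef, h1, h2] using (stronglyMeasurable_const : StronglyMeasurable[G] (fun _ : Ω => (0 : ℝ)))
      have hsum : (∑ k, W k) = 0 := by
        funext ω
        rw [Finset.sum_apply]
        have hterm : ∀ k : Fin n, W k ω =
            (if k = i then s.indicator 1 ω else 0) +
            (if k = j then -(s.indicator 1 ω) else 0) := by
          intro k
          rcases eq_or_ne k i with rfl | h1
          · rcases eq_or_ne k j with h2 | h2
            · exact absurd h2 hij
            · simp [hWdef, h2]
          rcases eq_or_ne k j with rfl | h2
          · simp [hWdef, h1]
          · simp [hWdef, h1, h2]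
        rw [Finset.sum_congr rfl fun k _ => hterm k, Finset.sum_add_distrib]
        simp
      have hpt : ∀ ω, (∑ k, W k ω * Y k ω) = s.indicator 1 ω * (Y i ω - Y j ω) := by
        intro ω
        have hterm : ∀ k : Fin n, W k ω * Y k ω =
            (if k = i then s.indicator 1 ω * Y i ω else 0) +
            (if k = j then -(s.indicator 1 ω * Y j ω) else 0) := by
          intro k
          rcases eq_or_ne k i with rfl | h1
          · rcases eq_or_ne k j with h2 | h2
            · exact absurd h2 hij
            · simp [hWdef, h2]
          rcases eq_or_ne k j with rfl | h2
          · simp [hWdef, h1]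
          · simp [hWdef, h1, h2]
        rw [Finset.sum_congr rfl fun k _ => hterm k, Finset.sum_add_distrib]
        simp only [Finset.sum_ite_eq', Finset.mem_univ, ite_true]
        ring
      have h0 := h W hWp hWm hsum
      have h1 : ∫ ω, s.indicator 1 ω * (Y i ω - Y j ω) ∂μ = 0 := by
        rw [← h0]
        exact integral_congr_ae (Filter.Eventually.of_forall fun ω => (hpt ω).symm)
      have h2 : ∀ ω, s.indicator 1 ω * (Y i ω - Y j ω) =
          s.indicator (fun ω => Y i ω - Y j ω) ω := by
        intro ω; by_cases hω : ω ∈ s <;> simp [hω]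
      rw [integral_congr_ae (Filter.Eventually.of_forall h2),
        @integral_indicator Ω ℝ mΩ _ _ (fun ω => Y i ω - Y j ω) s μ hsΩ,
        integral_sub ((hYint i).integrableOn) ((hYint j).integrableOn),
        sub_eq_zero] at h1
      exact h1
    have h1 : μ[Y j|G] =ᵐ[μ] μ[Y i|G] := by
      refine ae_eq_condExp_of_forall_setIntegral_eq hG (hYint i)
        (fun s hs _ => integrable_condExp.integrableOn)
        (fun s hs _ => ?_)
        stronglyMeasurable_condExp.aestronglyMeasurable
      rw [setIntegral_condExp hG (hYint j) hs]
      exact (key s hs).symm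
    exact h1.symm
  · -- equal conditional expectations → annihilator condition
    intro h W hWp hWm hsum
    have i0 : Fin n := ⟨0, by omega⟩
    set c : Ω → ℝ := μ[Y i0|G] with hc
    have hWY : ∀ i, Integrable (fun ω => W i ω * Y i ω) μ := fun i => hmul (W i) i (hWp i)
    have hcond : ∀ i, μ[(fun ω => W i ω * Y i ω)|G] =ᵐ[μ] fun ω => W i ω * c ω := by
      intro i
      have h1 : μ[W i * Y i|G] =ᵐ[μ] W i * μ[Y i|G] :=
        condExp_mul_of_stronglyMeasurable_left (hWm i) (hWY i) (hYint i)
      have h2 : (W i * μ[Y i|G] : Ω → ℝ) =ᵐ[μ] fun ω => W i ω * c ω := by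
        filter_upwards [h i i0] with ω hω
        simp [Pi.mul_apply, hω, hc]
      exact h1.trans h2
    have hWc : ∀ i, Integrable (fun ω => W i ω * c ω) μ := fun i =>
      integrable_condExp.congr (hcond i)
    rw [integral_finset_sum _ fun i _ => hWY i]
    have hterm : ∀ i, ∫ ω, W i ω * Y i ω ∂μ = ∫ ω, W i ω * c ω ∂μ := by
      intro i
      rw [← integral_condExp (μ := μ) hG (f := fun ω => W i ω * Y i ω)]
      exact integral_congr_ae (hcond i)
    rw [Finset.sum_congr rfl fun i _ => hterm i,
      ← integral_finset_sum _ fun i _ => hWc i]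
    have hzero : ∀ ω, (∑ i, W i ω * c ω) = 0 := by
      intro ω
      rw [← Finset.sum_mul]
      have hs := congrFun hsum ω
      rw [Finset.sum_apply] at hs
      rw [hs, Pi.zero_apply, zero_mul]
    simp only [hzero, integral_zero]
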